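/- Let R be a finite commutative chain ring with maximal ideal ⟨γ⟩, nilpotency index t, and residue field of cardinality q. Let λ be a unit of R, n a positive integer with gcd(n, q) = 1, and let C be an ideal of R[x] = R[X]/⟨X^n − λ⟩ of the form C = γ^{r_0}·θ_0·R[x] ⊕ ⋯ ⊕ γ^{r_{l−1}}·θ_{l−1}·R[x], where θ_0, …, θ_l are pairwise orthogonal idempotents summing to 1, 0 ≤ r_0 < ⋯ < r_{l−1} < r_l = t, and g_0, …, g_l ∈ R[X] are monic pairwise coprime polynomials with g_0⋯g_l = X^n − λ and θ_i·R[x] ≅ R[X]/⟨g_i⟩ for all i. Then the cardinality of C is |C| = q^{∑_{i=0}^{l−1} (t − r_i)·deg(g_i)}. -/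

import Mathlib

open Polynomial

section Defs

variable {R : Type*}

/-- An idempotent `e` of a commutative ring is *primitive* if it is nonzero and cannot be
written as a sum of two nonzero orthogonal idempotents. -/
def IsPrimitiveIdem [CommRing R] (e : R) : Prop :=
  IsIdempotentElem e ∧ e ≠ 0 ∧
    ∀ u v : R, IsIdempotentElem u → IsIdempotentElem v → u * v = 0 → e = u + v →
      u = 0 ∨ v = 0

/-- A family of idempotents forming a complete set of pairwise orthogonal idempotents. -/
def IsCompleteOrthoIdem [CommRing R] {r : ℕ} (e : Fin r → R) : Prop :=
  (∀ i, IsIdempotentElem (e i)) ∧ (∑ i, e i) = 1 ∧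
    ∀ i j, i ≠ j → e i * e j = 0

/-- A complete set of pairwise orthogonal primitive idempotents. -/
def IsCompletePrimIdem [CommRing R] {r : ℕ} (e : Fin r → R) : Prop :=
  IsCompleteOrthoIdem e ∧ ∀ i, IsPrimitiveIdem (e i)

/-- The `lam`-constacyclic shift `(a_0, …, a_(n-1)) ↦ (lam·a_(n-1), a_0, …, a_(n-2))`. -/
def ctShift [CommRing R] {n : ℕ} [NeZero n] (lam : R) (a : Fin n → R) : Fin n → R :=
  fun i => if i = 0 then lam * a (i - 1) else a (i - 1)

/-- The dual code of a linear code of length `n` over `R`. -/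
def dualCode [CommRing R] {n : ℕ} (Ccode : Submodule R (Fin n → R)) :
    Submodule R (Fin n → R) where
  carrier := {a | ∀ b ∈ Ccode, ∑ i, a i * b i = 0}
  add_mem' := by
    intro a a' ha ha' b hb
    simpa [add_mul, Finset.sum_add_distrib] using by rw [ha b hb, ha' b hb, add_zero]
  zero_mem' := by intro b hb; simp
  smul_mem' := by
    intro c a ha b hb
    simpa [Finset.mul_sum, mul_assoc] using by rw [← Finset.mul_sum, ha b hb, mul_zero]

/-- The linear map `(a_0, …, a_(n-1)) ↦ a_0 + a_1 x + ⋯ + a_(n-1) x^(n-1)` from `R^n` to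
`R[X]/⟨g⟩`. -/
noncomputable def polyLin [CommRing R] (n : ℕ) (g : R[X]) :
    (Fin n → R) →ₗ[R] (R[X] ⧸ Ideal.span {g}) where
  toFun a := Ideal.Quotient.mk _ (∑ i, C (a i) * X ^ (i : ℕ))
  map_add' a b := by
    simp only [Pi.add_apply, map_add, add_mul, Finset.sum_add_distrib]
  map_smul' c a := by
    simp only [Pi.smul_apply, smul_eq_mul, RingHom.id_apply]
    have h : (∑ i : Fin n, C (c * a i) * X ^ (i : ℕ))
        = c • ∑ i : Fin n, C (a i) * X ^ (i : ℕ) := by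
      rw [Finset.smul_sum]
      exact Finset.sum_congr rfl fun i _ => by
        rw [Polynomial.smul_eq_C_mul, ← mul_assoc, ← C_mul]
    rw [h]
    exact (Submodule.Quotient.mk_smul (Ideal.span {g}) c
      (∑ i : Fin n, C (a i) * X ^ (i : ℕ))).symm

/-- The linear code of length `n` corresponding to an ideal of `R[X]/⟨g⟩` under the usual
identification. -/
noncomputable def idealCode [CommRing R] (n : ℕ) (g : R[X])
    (I : Ideal (R[X] ⧸ Ideal.span {g})) : Submodule R (Fin n → R) :=
  (Submodule.restrictScalars R (I : Submodule (R[X] ⧸ Ideal.span {g}) (R[X] ⧸ Ideal.span {g}))).comap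
    (polyLin n g)

/-- The reciprocal `f* = a_0 x^(n-1) + a_1 x^(n-2) + ⋯ + a_(n-1)` of an element
`f = a_0 + a_1 x + ⋯ + a_(n-1) x^(n-1)` of `R[X]/⟨g⟩`, viewed in `R[X]/⟨h⟩`; the canonical
representative of degree `< n` is obtained by reduction `%ₘ g` of any representative. -/
noncomputable def recip [CommRing R] (n : ℕ) (g h : R[X]) (f : R[X] ⧸ Ideal.span {g}) :
    R[X] ⧸ Ideal.span {h} :=
  Ideal.Quotient.mk _ (((Ideal.Quotient.mk_surjective f).choose %ₘ g).reflect (n - 1))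

/-- The code `c·R^n = {(c·b_0, …, c·b_(n-1)) : b ∈ R^n}`. -/
def scalarCode [CommRing R] (n : ℕ) (c : R) : Submodule R (Fin n → R) where
  carrier := {a | ∀ i, ∃ b, a i = c * b}
  add_mem' := by
    intro a a' ha ha' i
    obtain ⟨b, hb⟩ := ha i; obtain ⟨b', hb'⟩ := ha' i
    exact ⟨b + b', by simp [hb, hb', mul_add]⟩
  zero_mem' := fun i => ⟨0, by simp⟩
  smul_mem' := by
    intro r a ha i
    obtain ⟨b, hb⟩ := ha i
    exact ⟨r * b, by simp [hb]; ring⟩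

end Defs


section Helpers

lemma card_iSup_ortho {A : Type*} [CommRing A] {ι : Type*} [Fintype ι]
    (e : ι → A) (horth : ∀ i j, i ≠ j → e i * e j = 0)
    (p : ι → Ideal A) (hp : ∀ i, ∀ x ∈ p i, x * e i = x) :
    Nat.card ↥(⨆ i, p i) = ∏ i, Nat.card ↥(p i) := by
  classical
  let Φ : (∀ i, ↥(p i)) →ₗ[A] A :=
    { toFun := fun x => ∑ i, (x i : A)
      map_add' := fun x y => by simp [Finset.sum_add_distrib]
      map_smul' := fun a x => by simp [Finset.mul_sum] }
  have key : ∀ (x : ∀ i, ↥(p i)) (j : ι), Φ x * e j = (x j : A) := by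
    intro x j
    have h1 : ∀ i, (x i : A) * e j = if i = j then (x j : A) else 0 := by
      intro i
      by_cases h : i = j
      · subst h; simp [hp i _ (x i).2]
      · rw [← hp i _ (x i).2, mul_assoc, horth i j h, mul_zero, if_neg h]
    show (∑ i, (x i : A)) * e j = (x j : A)
    rw [Finset.sum_mul, Finset.sum_congr rfl (fun i _ => h1 i), Finset.sum_ite_eq'
      Finset.univ j (fun _ => ((x j : A)))]
    simp
  have hinj : Function.Injective Φ := by
    intro x y hxy
    funext j
    exact Subtype.ext (by rw [← key x j, ← key y j, hxy])
  have hrange : LinearMap.range Φ = ⨆ i, p i := by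
    apply le_antisymm
    · rintro _ ⟨x, rfl⟩
      exact Submodule.sum_mem _ (fun i _ => Submodule.mem_iSup_of_mem i (x i).2)
    · refine iSup_le fun i m hm => ⟨Pi.single i ⟨m, hm⟩, ?_⟩
      show (∑ j, ((Pi.single i (⟨m, hm⟩ : ↥(p i)) : ∀ i, ↥(p i)) j : A)) = m
      rw [Finset.sum_eq_single i]
      · simp
      · intro j _ hj; rw [Pi.single_eq_of_ne hj]; rfl
      · intro h; exact absurd (Finset.mem_univ i) h
  calc Nat.card ↥(⨆ i, p i) = Nat.card ↥(LinearMap.range Φ) := by rw [hrange]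
    _ = Nat.card ↥(Set.range Φ) := rfl
    _ = Nat.card (∀ i, ↥(p i)) := Nat.card_range_of_injective hinj
    _ = ∏ i, Nat.card ↥(p i) := Nat.card_pi

lemma chain_card {R : Type*} [CommRing R] [IsLocalRing R]
    (γ : R) (t : ℕ) (hmax : IsLocalRing.maximalIdeal R = Ideal.span {γ})
    (hnil : γ ^ t = 0) (hnil' : γ ^ (t - 1) ≠ 0)
    (q : ℕ) (hq : q = Nat.card (R ⧸ Ideal.span {γ})) :
    ∀ j, j ≤ t → Nat.card ↥(Ideal.span {γ ^ (t - j)} : Ideal R) = q ^ j := by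
  have hker_aux : ∀ k, k < t → ∀ x : R, γ ^ k * x = 0 → x ∈ Ideal.span {γ} := by
    intro k hk x hx
    by_contra hmem
    have hu : IsUnit x := by
      by_contra h
      exact hmem (hmax ▸ (IsLocalRing.mem_maximalIdeal x).mpr h)
    have hγk : γ ^ k = 0 := by
      obtain ⟨u, rfl⟩ := hu
      calc γ ^ k = γ ^ k * ↑u * ↑u⁻¹ := by
            rw [mul_assoc, ← Units.val_mul, mul_inv_cancel, Units.val_one, mul_one]
        _ = 0 := by rw [hx, zero_mul]
    apply hnil'
    have hk' : k ≤ t - 1 := Nat.le_sub_one_of_lt hk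
    calc γ ^ (t - 1) = γ ^ k * γ ^ (t - 1 - k) := by rw [← pow_add, Nat.add_sub_cancel' hk']
      _ = 0 := by rw [hγk, zero_mul]
  intro j
  induction j with
  | zero =>
    intro _
    rw [Nat.sub_zero, hnil, pow_zero]
    rw [show (Ideal.span {(0 : R)} : Ideal R) = ⊥ from Ideal.span_singleton_eq_bot.mpr rfl]
    exact Nat.card_unique
  | succ j ih =>
    intro hj1
    have hjt : j ≤ t := Nat.le_of_succ_le hj1
    set k := t - (j + 1) with hkdef
    have hk : k < t := by omega
    have hk1 : t - j = k + 1 := by omega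
    set p : Ideal R := Ideal.span {γ ^ k} with hpdef
    set p' : Ideal R := Ideal.span {γ ^ (k + 1)} with hp'def
    have hle : p' ≤ p := Ideal.span_singleton_le_span_singleton.mpr ⟨γ, (pow_succ γ k)⟩
    set K : Submodule R ↥p := Submodule.comap p.subtype p' with hKdef
    let g0 : R →ₗ[R] ↥p :=
      { toFun := fun x => ⟨γ ^ k * x, Ideal.mem_span_singleton'.mpr ⟨x, mul_comm x _⟩⟩
        map_add' := fun a b => Subtype.ext (by simp [mul_add])
        map_smul' := fun a b => Subtype.ext (by simp only [smul_eq_mul, RingHom.id_apply, SetLike.val_smul]; ring) }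
    let f : R →ₗ[R] (↥p ⧸ K) := K.mkQ.comp g0
    have hsurj : Function.Surjective f := by
      intro z
      obtain ⟨y, rfl⟩ := Submodule.Quotient.mk_surjective K z
      obtain ⟨a, ha⟩ := Ideal.mem_span_singleton'.mp y.2
      refine ⟨a, ?_⟩
      show Submodule.Quotient.mk (g0 a) = Submodule.Quotient.mk y
      congr 1
      exact Subtype.ext (by show γ ^ k * a = (y : R); rw [mul_comm]; exact ha)
    have hker : LinearMap.ker f = Ideal.span {γ} := by
      ext x
      have hmem_iff : f x = 0 ↔ γ ^ k * x ∈ p' := by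
        show Submodule.Quotient.mk (g0 x) = 0 ↔ _
        rw [Submodule.Quotient.mk_eq_zero]
        exact Iff.rfl
      rw [LinearMap.mem_ker, hmem_iff]
      constructor
      · intro h
        obtain ⟨a, ha⟩ := Ideal.mem_span_singleton'.mp h
        have h0 : γ ^ k * (x - γ * a) = 0 := by
          rw [mul_sub, ← ha]; ring
        have := hker_aux k hk _ h0
        have hγa : γ * a ∈ Ideal.span {γ} :=
          Ideal.mem_span_singleton'.mpr ⟨a, mul_comm a γ⟩
        have := Ideal.add_mem _ this hγa
        simpa using this
      · intro h
        obtain ⟨a, ha⟩ := Ideal.mem_span_singleton'.mp h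
        exact Ideal.mem_span_singleton'.mpr ⟨a, by rw [← ha]; ring⟩
    have equivQ : (R ⧸ LinearMap.ker f) ≃ₗ[R] (↥p ⧸ K) := f.quotKerEquivOfSurjective hsurj
    have cardQ : Nat.card (↥p ⧸ K) = q := by
      rw [← Nat.card_congr equivQ.toEquiv, hker, hq]
    have cardK : Nat.card ↥K = q ^ j := by
      rw [Nat.card_congr (Submodule.comapSubtypeEquivOfLe hle).toEquiv]
      have := ih hjt
      rw [hk1] at this
      exact this
    have := Submodule.card_eq_card_quotient_mul_card K
    rw [cardQ, cardK] at this
    rw [this]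
    exact (pow_succ q j).symm

end Helpers

/-- Cardinality of a λ-constacyclic code `C = ⊕ γ^{rᵢ}·θᵢ·R[x]`:
`|C| = q^{∑ (t - rᵢ)·deg gᵢ}`. -/
theorem constacyclic_code_card
    {R : Type*} [CommRing R] [Finite R] [IsLocalRing R]
    (γ : R) (t : ℕ)
    (hmax : IsLocalRing.maximalIdeal R = Ideal.span {γ})
    (hnil : γ ^ t = 0) (hnil' : γ ^ (t - 1) ≠ 0)
    (q : ℕ) (hq : q = Nat.card (IsLocalRing.ResidueField R))
    (lam : R) (hlam : IsUnit lam)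
    (n : ℕ) (hn : 0 < n) (hgcd : Nat.gcd n q = 1)
    (l : ℕ) (θ : Fin (l + 1) → (Polynomial R ⧸ Ideal.span {X ^ n - C lam}))
    (rr : Fin (l + 1) → ℕ)
    (hθ : IsCompleteOrthoIdem θ) (hrr : StrictMono rr) (hlast : rr (Fin.last l) = t)
    (g : Fin (l + 1) → Polynomial R) (hmonic : ∀ i, (g i).Monic)
    (hcoprime : ∀ i j, i ≠ j → IsCoprime (g i) (g j))
    (hprod : (∏ i, g i) = X ^ n - C lam)
    (hiso : ∀ i, Nonempty ((Polynomial R ⧸ Ideal.span {g i}) ≃ₗ[Polynomial R]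
      Submodule.restrictScalars (Polynomial R)
        (Ideal.span {θ i} : Ideal (Polynomial R ⧸ Ideal.span {X ^ n - C lam}))))
    (Ccode : Ideal (Polynomial R ⧸ Ideal.span {X ^ n - C lam}))
    (hC : Ccode = ⨆ i : Fin l, Ideal.span
      {(Ideal.Quotient.mk (Ideal.span {X ^ n - C lam}) (C γ)) ^ rr i.castSucc *
        θ i.castSucc}) :
    Nat.card Ccode = q ^ (∑ i : Fin l, (t - rr i.castSucc) * (g i.castSucc).natDegree) := by
    classical
  set δ : Polynomial R ⧸ Ideal.span {X ^ n - C lam} :=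
    Ideal.Quotient.mk (Ideal.span {X ^ n - C lam}) (C γ) with hδ
  have hq' : q = Nat.card (R ⧸ Ideal.span {γ}) := by
    rw [hq]
    show Nat.card (R ⧸ IsLocalRing.maximalIdeal R) = _
    rw [hmax]
  have hchain := chain_card γ t hmax hnil hnil' q hq'
  set p : Fin l → Ideal (Polynomial R ⧸ Ideal.span {X ^ n - C lam}) :=
    fun i => Ideal.span {δ ^ rr i.castSucc * θ i.castSucc} with hp
  have hCcard : Nat.card Ccode = ∏ i, Nat.card ↥(p i) := by
    rw [hC]
    refine card_iSup_ortho (fun i : Fin l => θ i.castSucc) ?_ p ?_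
    · intro i j hij
      show θ i.castSucc * θ j.castSucc = 0
      exact hθ.2.2 _ _ (fun h => hij (Fin.castSucc_injective l h))
    · intro i x hx
      show x * θ i.castSucc = x
      obtain ⟨a, ha⟩ := Ideal.mem_span_singleton'.mp hx
      rw [← ha, mul_assoc, mul_assoc, (hθ.1 i.castSucc)]
  rw [hCcard]
  have hi_card : ∀ i : Fin l, Nat.card ↥(p i) =
      q ^ ((t - rr i.castSucc) * (g i.castSucc).natDegree) := by
    intro i
    set i' := i.castSucc with hi'
    set r := rr i' with hr
    have hrt : r < t := hlast ▸ hrr (Fin.castSucc_lt_last i)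
    obtain ⟨φ⟩ := hiso i'
    have hsmulQ : ∀ (P : Polynomial R) (z : Polynomial R ⧸ Ideal.span {X ^ n - C lam}),
        P • z = Ideal.Quotient.mk (Ideal.span {X ^ n - C lam}) P * z := fun P z => by
      obtain ⟨Z, rfl⟩ := Ideal.Quotient.mk_surjective z
      rw [← map_mul]; rfl
    have hsmulAR : ∀ (c : R) (z : Polynomial R ⧸ Ideal.span {g i'}),
        c • z = ((C c : Polynomial R)) • z := fun c z => by
      rw [← algebraMap_smul (Polynomial R) c z, Polynomial.algebraMap_eq]
    set ψ : (Polynomial R ⧸ Ideal.span {g i'}) → (Polynomial R ⧸ Ideal.span {X ^ n - C lam}) :=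
      fun y => ((φ y : _) : Polynomial R ⧸ Ideal.span {X ^ n - C lam}) with hψ
    have hψinj : Function.Injective ψ := fun a b hab => φ.injective (Subtype.ext hab)
    set S1 : Set (Polynomial R ⧸ Ideal.span {g i'}) :=
      Set.range (fun y => ((C γ : Polynomial R)) ^ r • y) with hS1
    have hψsmul : ∀ (P : Polynomial R) (z : Polynomial R ⧸ Ideal.span {g i'}),
        ψ (P • z) = P • ψ z := fun P z =>
      congrArg Subtype.val (map_smul φ P z)
    have himg : ψ '' S1 = (p i : Set (Polynomial R ⧸ Ideal.span {X ^ n - C lam})) := by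
      ext w
      constructor
      · rintro ⟨_, ⟨z, rfl⟩, rfl⟩
        have h1 : ψ ((C γ : Polynomial R) ^ r • z) = δ ^ r * ψ z := by
          rw [hψsmul, hsmulQ, map_pow]
        have h2 : ψ z ∈ Ideal.span {θ i'} := (φ z).2
        obtain ⟨a, ha⟩ := Ideal.mem_span_singleton'.mp h2
        show ψ _ ∈ p i
        rw [h1, ← ha]
        exact Ideal.mem_span_singleton'.mpr ⟨a, by ring⟩
      · intro hw
        obtain ⟨a, ha⟩ := Ideal.mem_span_singleton'.mp hw
        obtain ⟨Pa, hPa⟩ := Ideal.Quotient.mk_surjective a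
        have hθmem : θ i' ∈ Submodule.restrictScalars (Polynomial R)
            (Ideal.span {θ i'} : Ideal (Polynomial R ⧸ Ideal.span {X ^ n - C lam})) :=
          Ideal.mem_span_singleton_self _
        refine ⟨(C γ : Polynomial R) ^ r • (Pa • φ.symm ⟨θ i', hθmem⟩),
          ⟨Pa • φ.symm ⟨θ i', hθmem⟩, rfl⟩, ?_⟩
        have hφy0 : ψ (φ.symm ⟨θ i', hθmem⟩) = θ i' := by
          show ((φ (φ.symm ⟨θ i', hθmem⟩) : _) : _) = θ i'
          rw [LinearEquiv.apply_symm_apply]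
        rw [hψsmul, hψsmul, hφy0, hsmulQ, hsmulQ, map_pow, hPa, ← ha]
        ring
    have c1 : Nat.card ↥(p i) = Nat.card ↥S1 := by
      calc Nat.card ↥(p i) = Nat.card ↥(ψ '' S1) := by rw [himg]; rfl
        _ = Nat.card ↥S1 := Nat.card_congr (Equiv.Set.image ψ S1 hψinj).symm
    rw [c1]
    have hS1' : S1 = Set.range (fun y : Polynomial R ⧸ Ideal.span {g i'} =>
        (γ ^ r : R) • y) := by
      rw [hS1]
      have hfun : (fun y : Polynomial R ⧸ Ideal.span {g i'} => (C γ : Polynomial R) ^ r • y)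
          = (fun y : Polynomial R ⧸ Ideal.span {g i'} => (γ ^ r : R) • y) :=
        funext fun y => by rw [← map_pow, ← hsmulAR]
      rw [hfun]
    rw [hS1']
    set d := (g i').natDegree with hd
    let b : Module.Basis (Fin d) R (Polynomial R ⧸ Ideal.span {g i'}) :=
      AdjoinRoot.powerBasisAux' (hmonic i')
    set e := b.equivFun with he
    have himg2 : (e : (Polynomial R ⧸ Ideal.span {g i'}) → (Fin d → R)) ''
          (Set.range fun y : Polynomial R ⧸ Ideal.span {g i'} => (γ ^ r : R) • y)
        = Set.range (fun v : Fin d → R => (γ ^ r : R) • v) := by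
      ext w
      constructor
      · rintro ⟨_, ⟨z, rfl⟩, rfl⟩
        exact ⟨e z, (map_smul e _ z).symm⟩
      · rintro ⟨v, rfl⟩
        exact ⟨(γ ^ r : R) • e.symm v, ⟨e.symm v, rfl⟩, by rw [map_smul]; simp⟩
    have c2 : Nat.card ↥(Set.range fun y : Polynomial R ⧸ Ideal.span {g i'} =>
          (γ ^ r : R) • y)
        = Nat.card ↥(Set.range fun v : Fin d → R => (γ ^ r : R) • v) := by
      rw [← himg2]
      exact Nat.card_congr (Equiv.Set.image (e : (Polynomial R ⧸ Ideal.span {g i'}) → (Fin d → R))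
        (Set.range fun y : Polynomial R ⧸ Ideal.span {g i'} => (γ ^ r : R) • y)
        e.injective)
    rw [c2]
    have hset : (Set.range fun v : Fin d → R => (γ ^ r : R) • v)
        = {w : Fin d → R | ∀ j, w j ∈ Ideal.span {γ ^ r}} := by
      ext w
      constructor
      · rintro ⟨v, rfl⟩ j
        exact Ideal.mem_span_singleton'.mpr ⟨v j, mul_comm _ _⟩
      · intro h
        choose v hv using fun j => Ideal.mem_span_singleton'.mp (h j)
        exact ⟨v, funext fun j => by
          show γ ^ r * v j = w j
          rw [mul_comm]; exact hv j⟩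
    rw [hset]
    have c3 : Nat.card ↥{w : Fin d → R | ∀ j, w j ∈ Ideal.span {γ ^ r}}
        = Nat.card (∀ _ : Fin d, ↥(Ideal.span {γ ^ r} : Ideal R)) :=
      Nat.card_congr
        { toFun := fun w j => ⟨w.1 j, w.2 j⟩
          invFun := fun v => ⟨fun j => (v j : R), fun j => (v j).2⟩
          left_inv := fun w => rfl
          right_inv := fun v => rfl }
    rw [c3, Nat.card_pi, Finset.prod_const, Finset.card_univ, Fintype.card_fin]
    have c4 : Nat.card ↥(Ideal.span {γ ^ r} : Ideal R) = q ^ (t - r) := by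
      have h := hchain (t - r) (Nat.sub_le t r)
      rw [Nat.sub_sub_self (le_of_lt hrt)] at h
      exact h
    rw [c4, ← pow_mul]
  rw [Finset.prod_congr rfl (fun i _ => hi_card i)]
  exact Finset.prod_pow_eq_pow_sum _ _ _
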